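/- arXiv:1607.06728 — 2 statements merged into one kernel-verified Lean document; each statement's English description precedes it below -/
import Mathlib

section
/- Let λ : ℝⁿ → (0,∞) be a continuous weight function satisfying the sub-additive condition (SA), condition (SH) (λ(tξ) ≤ C λ(ξ) for |t| ≤ 1), and the polynomial growth condition (PG): (1/C)(1+|ξ|)^ν ≤ λ(ξ) ≤ C(1+|ξ|)^μ for constants C ≥ 1 and 0 < ν ≤ μ. Let c > 0 be fixed. Then for every ε > 0 there exists 0 < ε′ < ε such that for every set X ⊂ ℝⁿ one has (X ∩ {ξ : λ(ξ) > c/ε′})_{ε′λ} ⊂ X_{[ελ]} ∩ {ξ : λ(ξ) > c/ε}. -/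
open MeasureTheory
open scoped ENNReal

/-- The temperance condition (T). -/
def IsTemperate {n : ℕ} (ω : EuclideanSpace ℝ (Fin n) → ℝ) : Prop :=
  ∃ C N : ℝ, 0 < C ∧ 0 < N ∧ ∀ ξ η, ω ξ ≤ C * (1 + ‖ξ - η‖) ^ N * ω η

/-- The sub-additive condition (SA). -/
def IsSubAdditiveWeight {n : ℕ} (ω : EuclideanSpace ℝ (Fin n) → ℝ) : Prop :=
  ∃ C : ℝ, 0 < C ∧ ∀ ξ η, ω ξ ≤ C * (ω (ξ - η) + ω η)

/-- Condition (SH): `ω(tξ) ≤ C ω(ξ)` for all `ξ` and `|t| ≤ 1`. -/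
def SatisfiesSH {n : ℕ} (ω : EuclideanSpace ℝ (Fin n) → ℝ) : Prop :=
  ∃ C : ℝ, 0 < C ∧ ∀ (ξ : EuclideanSpace ℝ (Fin n)) (t : ℝ), |t| ≤ 1 → ω (t • ξ) ≤ C * ω ξ

/-- The `[λ]`-neighborhood of size `ε` of a set `X ⊆ ℝⁿ`:
`X_{[ελ]} = ⋃_{ξ₀ ∈ X} {ξ : λ(ξ - ξ₀) < ε λ(ξ₀)}`. -/
def brNbhd {n : ℕ} (lam : EuclideanSpace ℝ (Fin n) → ℝ) (ε : ℝ)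
    (X : Set (EuclideanSpace ℝ (Fin n))) : Set (EuclideanSpace ℝ (Fin n)) :=
  ⋃ ξ₀ ∈ X, {ξ | lam (ξ - ξ₀) < ε * lam ξ₀}

/-- The `λ`-neighborhood of size `ε` of a set `X ⊆ ℝⁿ`:
`X_{ελ} = ⋃_{ξ₀ ∈ X} {ξ : |ξ - ξ₀| < ε λ(ξ₀)^(1/μ)}`. -/
def eucNbhd {n : ℕ} (lam : EuclideanSpace ℝ (Fin n) → ℝ) (μ ε : ℝ)
    (X : Set (EuclideanSpace ℝ (Fin n))) : Set (EuclideanSpace ℝ (Fin n)) :=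
  ⋃ ξ₀ ∈ X, {ξ | ‖ξ - ξ₀‖ < ε * lam ξ₀ ^ μ⁻¹}

/-- Let `λ` be a continuous, positive weight satisfying (SA), (SH) and the polynomial
growth condition (PG) with constants `C₀ ≥ 1`, `0 < ν ≤ μ`, and let `c > 0` be fixed.
Then for every `ε > 0` there is `0 < ε' < ε` such that for every `X ⊆ ℝⁿ`:
`(X ∩ {λ > c/ε'})_{ε'λ} ⊆ X_{[ελ]} ∩ {λ > c/ε}`. -/
theorem eucNbhd_subset_brNbhd {n : ℕ}
    (lam : EuclideanSpace ℝ (Fin n) → ℝ) (C₀ ν μ : ℝ)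
    (hlam_pos : ∀ ξ, 0 < lam ξ) (hlam_cont : Continuous lam)
    (hlam_temp : IsTemperate lam)
    (hSA : IsSubAdditiveWeight lam) (hSH : SatisfiesSH lam)
    (hC₀ : 1 ≤ C₀) (hν : 0 < ν) (hνμ : ν ≤ μ)
    (hPG : ∀ ξ, C₀⁻¹ * (1 + ‖ξ‖) ^ ν ≤ lam ξ ∧ lam ξ ≤ C₀ * (1 + ‖ξ‖) ^ μ)
    (c : ℝ) (hc : 0 < c) :
    ∀ ε : ℝ, 0 < ε → ∃ ε' : ℝ, 0 < ε' ∧ ε' < ε ∧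
      ∀ X : Set (EuclideanSpace ℝ (Fin n)),
        eucNbhd lam μ ε' (X ∩ {ξ | c / ε' < lam ξ}) ⊆
          brNbhd lam ε X ∩ {ξ | c / ε < lam ξ} := by
  classical
  obtain ⟨Cs, hCs, hSAin⟩ := hSA
  intro ε hε
  have hμ : 0 < μ := lt_of_lt_of_le hν hνμ
  have hC₀0 : 0 < C₀ := lt_of_lt_of_le one_pos hC₀
  set A : ℝ := C₀ * (2:ℝ) ^ μ with hAdef
  have hA0 : 0 < A := mul_pos hC₀0 (Real.rpow_pos_of_pos two_pos μ)
  set δ : ℝ := min ε (1/(2*Cs)) with hδdef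
  have hδ0 : 0 < δ := lt_min hε (by positivity)
  set ε' : ℝ := min (min (ε/2) (ε/(2*Cs))) (min ((δ/A) ^ μ⁻¹) (c*δ/A)) with hε'def
  have hε'0 : 0 < ε' :=
    lt_min (lt_min (by positivity) (by positivity))
      (lt_min (Real.rpow_pos_of_pos (by positivity) _) (by positivity))
  refine ⟨ε', hε'0, ?_, ?_⟩
  · calc ε' ≤ ε/2 := le_trans (min_le_left _ _) (min_le_left _ _)
      _ < ε := by linarith
  intro X ξ hξ
  rw [eucNbhd] at hξ
  simp only [Set.mem_iUnion, Set.mem_inter_iff, Set.mem_setOf_eq] at hξ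
  obtain ⟨ξ₀, ⟨hξ₀X, hξ₀c⟩, hdist⟩ := hξ
  have hl0 : 0 < lam ξ₀ := hlam_pos ξ₀
  -- key claim
  have key : ∀ η : EuclideanSpace ℝ (Fin n), ‖η‖ < ε' * lam ξ₀ ^ μ⁻¹ → lam η < δ * lam ξ₀ := by
    intro η hη
    have hub := (hPG η).2
    have hpos : (0:ℝ) < ε' * lam ξ₀ ^ μ⁻¹ :=
      mul_pos hε'0 (Real.rpow_pos_of_pos hl0 _)
    have h1 : lam η < C₀ * (1 + ε' * lam ξ₀ ^ μ⁻¹) ^ μ := by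
      refine lt_of_le_of_lt hub ?_
      have := Real.rpow_lt_rpow (by positivity) (by linarith [norm_nonneg η, hη] : (1:ℝ) + ‖η‖ < 1 + ε' * lam ξ₀ ^ μ⁻¹) hμ
      exact mul_lt_mul_of_pos_left this hC₀0
    by_cases hcase : 1 ≤ ε' * lam ξ₀ ^ μ⁻¹
    · have h2 : (1 + ε' * lam ξ₀ ^ μ⁻¹) ^ μ ≤ (2 * (ε' * lam ξ₀ ^ μ⁻¹)) ^ μ :=
        Real.rpow_le_rpow (by positivity) (by linarith) hμ.le
      have h3 : (2 * (ε' * lam ξ₀ ^ μ⁻¹)) ^ μ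
          = (2:ℝ) ^ μ * (ε' ^ μ * lam ξ₀) := by
        rw [Real.mul_rpow (by norm_num) hpos.le,
          Real.mul_rpow hε'0.le (by positivity),
          ← Real.rpow_mul hl0.le, inv_mul_cancel₀ hμ.ne', Real.rpow_one]
      have hε'μ : ε' ^ μ ≤ δ / A := by
        have h4 : ε' ≤ (δ/A) ^ μ⁻¹ := le_trans (min_le_right _ _) (min_le_left _ _)
        calc ε' ^ μ ≤ ((δ/A) ^ μ⁻¹) ^ μ := Real.rpow_le_rpow hε'0.le h4 hμ.le
          _ = δ / A := by
            rw [← Real.rpow_mul (by positivity), inv_mul_cancel₀ hμ.ne', Real.rpow_one]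
      have h5 : lam η < C₀ * ((2:ℝ) ^ μ * (ε' ^ μ * lam ξ₀)) := by
        refine lt_of_lt_of_le h1 ?_
        rw [h3] at h2
        exact mul_le_mul_of_nonneg_left h2 hC₀0.le
      have h6 : C₀ * ((2:ℝ) ^ μ * (ε' ^ μ * lam ξ₀)) = A * ε' ^ μ * lam ξ₀ := by ring
      rw [h6] at h5
      refine lt_of_lt_of_le h5 ?_
      have : A * ε' ^ μ ≤ A * (δ/A) := mul_le_mul_of_nonneg_left hε'μ hA0.le
      calc A * ε' ^ μ * lam ξ₀ ≤ A * (δ/A) * lam ξ₀ :=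
            mul_le_mul_of_nonneg_right this hl0.le
        _ = δ * lam ξ₀ := by field_simp
    · push_neg at hcase
      have h2 : (1 + ε' * lam ξ₀ ^ μ⁻¹) ^ μ ≤ (2:ℝ) ^ μ :=
        Real.rpow_le_rpow (by positivity) (by linarith) hμ.le
      have h5 : lam η < A := lt_of_lt_of_le h1 (mul_le_mul_of_nonneg_left h2 hC₀0.le)
      have h6 : A / δ < lam ξ₀ := by
        have h7 : ε' ≤ c * δ / A := le_trans (min_le_right _ _) (min_le_right _ _)
        have h8 : c / ε' ≥ c / (c * δ / A) := by
          apply div_le_div_of_nonneg_left hc.le hε'0 h7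
        have h9 : c / (c * δ / A) = A / δ := by field_simp
        rw [h9] at h8
        linarith
      have : A < δ * lam ξ₀ := by
        rw [div_lt_iff₀ hδ0] at h6; linarith [h6]
      linarith
  -- apply claim
  have hnorm : ‖ξ₀ - ξ‖ = ‖ξ - ξ₀‖ := norm_sub_rev _ _
  have k1 : lam (ξ - ξ₀) < δ * lam ξ₀ := key _ hdist
  have k2 : lam (ξ₀ - ξ) < δ * lam ξ₀ := key _ (by rw [hnorm]; exact hdist)
  have hδε : δ ≤ ε := min_le_left _ _
  have hδCs : δ ≤ 1/(2*Cs) := min_le_right _ _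
  constructor
  · rw [brNbhd]
    simp only [Set.mem_iUnion, Set.mem_setOf_eq]
    refine ⟨ξ₀, hξ₀X, ?_⟩
    calc lam (ξ - ξ₀) < δ * lam ξ₀ := k1
      _ ≤ ε * lam ξ₀ := mul_le_mul_of_nonneg_right hδε hl0.le
  · simp only [Set.mem_setOf_eq]
    have hSAxi := hSAin ξ₀ ξ
    have hstep : lam ξ₀ ≤ Cs * lam (ξ₀ - ξ) + Cs * lam ξ := by
      calc lam ξ₀ ≤ Cs * (lam (ξ₀ - ξ) + lam ξ) := hSAxi
        _ = Cs * lam (ξ₀ - ξ) + Cs * lam ξ := by ring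
    have hsmall : Cs * lam (ξ₀ - ξ) < lam ξ₀ / 2 := by
      have : lam (ξ₀ - ξ) < (1/(2*Cs)) * lam ξ₀ := by
        refine lt_of_lt_of_le k2 (mul_le_mul_of_nonneg_right hδCs hl0.le)
      have h := mul_lt_mul_of_pos_left this hCs
      calc Cs * lam (ξ₀ - ξ) < Cs * ((1/(2*Cs)) * lam ξ₀) := h
        _ = lam ξ₀ / 2 := by field_simp
    have hlξ : lam ξ₀ / (2 * Cs) < lam ξ := by
      have : lam ξ₀ / 2 < Cs * lam ξ := by linarith
      rw [div_lt_iff₀ (by positivity)]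
      nlinarith
    have hε'small : ε' ≤ ε/(2*Cs) := le_trans (min_le_left _ _) (min_le_right _ _)
    have h10 : c / (ε/(2*Cs)) ≤ c / ε' :=
      div_le_div_of_nonneg_left hc.le hε'0 hε'small
    have h11 : c/(ε/(2*Cs)) = 2*Cs*(c/ε) := by field_simp
    rw [h11] at h10
    have h12 : 2*Cs*(c/ε) < lam ξ₀ := lt_of_le_of_lt h10 hξ₀c
    have h13 : lam ξ₀ / (2*Cs) > c/ε := by
      rw [gt_iff_lt, lt_div_iff₀ (by positivity)]
      nlinarith
    linarith
end

section
/- Let λ : ℝⁿ → (0,∞) be a continuous weight function satisfying the sub-additive condition (SA), condition (SH) (λ(tξ) ≤ C λ(ξ) for |t| ≤ 1), and the polynomial growth condition (PG): (1/C)(1+|ξ|)^ν ≤ λ(ξ) ≤ C(1+|ξ|)^μ for constants C ≥ 1 and 0 < ν ≤ μ. Then for every ε > 0 there exists 0 < ε′ < ε such that for every set X ⊂ ℝⁿ one has (X_{[ε′λ]})_{ε′λ} ⊂ X_{[ελ]}. -/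
open MeasureTheory
open scoped ENNReal

lemma one_add_rpow_le (b μ : ℝ) (hb : 0 ≤ b) (hμ : 0 ≤ μ) :
    (1 + b) ^ μ ≤ 2 ^ μ * (1 + b ^ μ) := by
  have h2 : (0:ℝ) ≤ 2 ^ μ := Real.rpow_nonneg (by norm_num) μ
  have hbμ : 0 ≤ b ^ μ := Real.rpow_nonneg hb μ
  rcases le_total b 1 with h | h
  · calc (1 + b) ^ μ ≤ 2 ^ μ := Real.rpow_le_rpow (by linarith) (by linarith) hμ
    _ ≤ 2 ^ μ * (1 + b ^ μ) := le_mul_of_one_le_right h2 (by linarith)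
  · calc (1 + b) ^ μ ≤ (2 * b) ^ μ := Real.rpow_le_rpow (by linarith) (by linarith) hμ
    _ = 2 ^ μ * b ^ μ := Real.mul_rpow (by norm_num) hb
    _ ≤ 2 ^ μ * (1 + b ^ μ) := by nlinarith


set_option maxHeartbeats 1000000 in
/-- Let `λ` be a continuous, positive weight satisfying (SA), (SH) and the polynomial
growth condition (PG) with constants `C₀ ≥ 1`, `0 < ν ≤ μ`.  Then for every `ε > 0` there
is `0 < ε' < ε` such that for every `X ⊆ ℝⁿ`: `(X_{[ε'λ]})_{ε'λ} ⊆ X_{[ελ]}`. -/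
theorem eucNbhd_of_brNbhd_subset_brNbhd {n : ℕ}
    (lam : EuclideanSpace ℝ (Fin n) → ℝ) (C₀ ν μ : ℝ)
    (hlam_pos : ∀ ξ, 0 < lam ξ) (hlam_cont : Continuous lam)
    (hlam_temp : IsTemperate lam)
    (hSA : IsSubAdditiveWeight lam) (hSH : SatisfiesSH lam)
    (hC₀ : 1 ≤ C₀) (hν : 0 < ν) (hνμ : ν ≤ μ)
    (hPG : ∀ ξ, C₀⁻¹ * (1 + ‖ξ‖) ^ ν ≤ lam ξ ∧ lam ξ ≤ C₀ * (1 + ‖ξ‖) ^ μ) :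
    ∀ ε : ℝ, 0 < ε → ∃ ε' : ℝ, 0 < ε' ∧ ε' < ε ∧
      ∀ X : Set (EuclideanSpace ℝ (Fin n)),
        eucNbhd lam μ ε' (brNbhd lam ε' X) ⊆ brNbhd lam ε X := by
  obtain ⟨C, hCpos, hSAin⟩ := hSA
  have hμ : 0 < μ := lt_of_lt_of_le hν hνμ
  have hC₀pos : (0:ℝ) < C₀ := by linarith
  have h2μ : (0:ℝ) < 2 ^ μ := Real.rpow_pos_of_pos (by norm_num) μ
  intro ε hε
  set A : ℝ := C * C₀ ^ 2 * 2 ^ μ + C with hA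
  set B : ℝ := 2 * C ^ 2 * C₀ * 2 ^ μ with hB
  have hApos : 0 < A := by positivity
  have hBpos : 0 < B := by positivity
  set ε' : ℝ := min (min (ε / 2) (ε / (3 * (A + 1)))) (min ((ε / (3 * (B + 1))) ^ μ⁻¹) 1)
    with hε'def
  have hε'pos : 0 < ε' := by
    apply lt_min (lt_min (by linarith) (by positivity))
    exact lt_min (Real.rpow_pos_of_pos (by positivity) _) one_pos
  have hε'lt : ε' < ε := lt_of_le_of_lt (le_trans (min_le_left _ _) (min_le_left _ _))
    (by linarith)
  have hε'le1 : ε' ≤ 1 := le_trans (min_le_right _ _) (min_le_right _ _)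
  -- key smallness facts
  have hterm1 : A * ε' ≤ ε / 3 := by
    have h1 : ε' ≤ ε / (3 * (A + 1)) := le_trans (min_le_left _ _) (min_le_right _ _)
    have : A * ε' ≤ A * (ε / (3 * (A + 1))) := by
      exact mul_le_mul_of_nonneg_left h1 hApos.le
    calc A * ε' ≤ A * (ε / (3 * (A + 1))) := this
    _ ≤ ε / 3 := by
        rw [show A * (ε / (3 * (A + 1))) = A * ε / (3 * (A + 1)) by ring,
          div_le_div_iff₀ (by positivity) (by norm_num)]
        nlinarith
  have hterm2 : B * ε' ^ μ ≤ ε / 3 := by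
    have h1 : ε' ≤ (ε / (3 * (B + 1))) ^ μ⁻¹ := le_trans (min_le_right _ _) (min_le_left _ _)
    have h2 : ε' ^ μ ≤ ((ε / (3 * (B + 1))) ^ μ⁻¹) ^ μ :=
      Real.rpow_le_rpow hε'pos.le h1 hμ.le
    rw [Real.rpow_inv_rpow (by positivity) hμ.ne'] at h2
    have : B * ε' ^ μ ≤ B * (ε / (3 * (B + 1))) := mul_le_mul_of_nonneg_left h2 hBpos.le
    calc B * ε' ^ μ ≤ B * (ε / (3 * (B + 1))) := this
    _ ≤ ε / 3 := by
        rw [show B * (ε / (3 * (B + 1))) = B * ε / (3 * (B + 1)) by ring,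
          div_le_div_iff₀ (by positivity) (by norm_num)]
        nlinarith
  refine ⟨ε', hε'pos, hε'lt, ?_⟩
  intro X ξ hξ
  simp only [eucNbhd, brNbhd, Set.mem_iUnion, Set.mem_setOf_eq] at hξ ⊢
  obtain ⟨η, ⟨ξ₀, hξ₀X, hηξ₀⟩, hξη⟩ := hξ
  refine ⟨ξ₀, hξ₀X, ?_⟩
  set L : ℝ := lam ξ₀ with hL
  have hLpos : 0 < L := hlam_pos ξ₀
  -- lower bound on L : 1 < ε' * C₀ * L
  have hlow : C₀⁻¹ ≤ lam (η - ξ₀) := by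
    have h1 : (1:ℝ) ≤ (1 + ‖η - ξ₀‖) ^ ν := by
      calc (1:ℝ) = 1 ^ ν := (Real.one_rpow ν).symm
      _ ≤ (1 + ‖η - ξ₀‖) ^ ν :=
        Real.rpow_le_rpow (by norm_num) (by linarith [norm_nonneg (η - ξ₀)]) hν.le
    calc C₀⁻¹ = C₀⁻¹ * 1 := by ring
    _ ≤ C₀⁻¹ * (1 + ‖η - ξ₀‖) ^ ν :=
        mul_le_mul_of_nonneg_left h1 (by positivity)
    _ ≤ lam (η - ξ₀) := (hPG _).1
  have hkey : 1 ≤ ε' * C₀ * L := by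
    have : C₀⁻¹ ≤ ε' * L := le_of_lt (lt_of_le_of_lt hlow hηξ₀)
    calc (1:ℝ) = C₀ * C₀⁻¹ := by field_simp
    _ ≤ C₀ * (ε' * L) := mul_le_mul_of_nonneg_left this hC₀pos.le
    _ = ε' * C₀ * L := by ring
  -- bound lam η
  have hη_bound : lam η ≤ 2 * C * L := by
    have := hSAin η ξ₀
    have h2 : lam (η - ξ₀) ≤ L := le_trans hηξ₀.le (by nlinarith)
    nlinarith
  -- bound ‖ξ - η‖
  have hnorm : ‖ξ - η‖ ≤ ε' * (2 * C * L) ^ μ⁻¹ := by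
    have h1 : lam η ^ μ⁻¹ ≤ (2 * C * L) ^ μ⁻¹ :=
      Real.rpow_le_rpow (hlam_pos η).le hη_bound (by positivity)
    calc ‖ξ - η‖ ≤ ε' * lam η ^ μ⁻¹ := hξη.le
    _ ≤ ε' * (2 * C * L) ^ μ⁻¹ := mul_le_mul_of_nonneg_left h1 hε'pos.le
  -- bound lam (ξ - η)
  have hb : (0:ℝ) ≤ ε' * (2 * C * L) ^ μ⁻¹ := by positivity
  have hmid : lam (ξ - η) ≤ C₀ * 2 ^ μ * (1 + ε' ^ μ * (2 * C * L)) := by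
    have h1 : lam (ξ - η) ≤ C₀ * (1 + ‖ξ - η‖) ^ μ := (hPG _).2
    have h2 : (1 + ‖ξ - η‖) ^ μ ≤ (1 + ε' * (2 * C * L) ^ μ⁻¹) ^ μ :=
      Real.rpow_le_rpow (by positivity) (by linarith) hμ.le
    have h3 : (1 + ε' * (2 * C * L) ^ μ⁻¹) ^ μ ≤
        2 ^ μ * (1 + (ε' * (2 * C * L) ^ μ⁻¹) ^ μ) := one_add_rpow_le _ μ hb hμ.le
    have h4 : (ε' * (2 * C * L) ^ μ⁻¹) ^ μ = ε' ^ μ * (2 * C * L) := by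
      rw [Real.mul_rpow hε'pos.le (by positivity), Real.rpow_inv_rpow (by positivity) hμ.ne']
    calc lam (ξ - η) ≤ C₀ * (1 + ‖ξ - η‖) ^ μ := h1
    _ ≤ C₀ * (2 ^ μ * (1 + (ε' * (2 * C * L) ^ μ⁻¹) ^ μ)) := by
        apply mul_le_mul_of_nonneg_left (le_trans h2 h3) hC₀pos.le
    _ = C₀ * 2 ^ μ * (1 + ε' ^ μ * (2 * C * L)) := by rw [h4]; ring
  -- replace the 1 by ε' * C₀ * L
  have hmid2 : lam (ξ - η) ≤ (C₀ ^ 2 * 2 ^ μ * ε' + 2 * C * C₀ * 2 ^ μ * ε' ^ μ) * L := by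
    calc lam (ξ - η) ≤ C₀ * 2 ^ μ * (1 + ε' ^ μ * (2 * C * L)) := hmid
    _ ≤ C₀ * 2 ^ μ * (ε' * C₀ * L + ε' ^ μ * (2 * C * L)) := by
        apply mul_le_mul_of_nonneg_left (by linarith) (by positivity)
    _ = (C₀ ^ 2 * 2 ^ μ * ε' + 2 * C * C₀ * 2 ^ μ * ε' ^ μ) * L := by ring
  -- conclude
  have hfinal : lam (ξ - ξ₀) < (A * ε' + B * ε' ^ μ) * L := by
    have h1 := hSAin (ξ - ξ₀) (η - ξ₀)
    have h2 : (ξ - ξ₀) - (η - ξ₀) = ξ - η := by abel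
    rw [h2] at h1
    have h3 : C * (lam (ξ - η) + lam (η - ξ₀)) < C * ((C₀ ^ 2 * 2 ^ μ * ε' +
        2 * C * C₀ * 2 ^ μ * ε' ^ μ) * L + ε' * L) := by
      apply mul_lt_mul_of_pos_left _ hCpos
      exact add_lt_add_of_le_of_lt hmid2 hηξ₀
    calc lam (ξ - ξ₀) ≤ C * (lam (ξ - η) + lam (η - ξ₀)) := h1
    _ < C * ((C₀ ^ 2 * 2 ^ μ * ε' + 2 * C * C₀ * 2 ^ μ * ε' ^ μ) * L + ε' * L) := h3
    _ = (A * ε' + B * ε' ^ μ) * L := by rw [hA, hB]; ring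
  have : (A * ε' + B * ε' ^ μ) * L ≤ (2 * ε / 3) * L := by
    apply mul_le_mul_of_nonneg_right _ hLpos.le
    linarith
  calc lam (ξ - ξ₀) < (A * ε' + B * ε' ^ μ) * L := hfinal
  _ ≤ (2 * ε / 3) * L := this
  _ < ε * L := by nlinarith
end
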